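/- For the classical case p = 1, q = 2: if no two consecutive sites are both 1 and the number of ones is strictly less than N/2, then applying rule 232 (majority over the 3-site neighborhood) ⌈N/2⌉ times yields the all-zeros configuration. -/
import Mathlib


open Finset

/-- Number of sites in state one (cars) in a configuration. -/
def onesCount {N : ℕ} [NeZero N] (x : ZMod N → Fin 2) : ℕ :=
  (Finset.univ.filter (fun i => x i = 1)).card

/-- Number of ones in the window of `q` consecutive sites starting at `i`. -/
def wcount (q : ℕ) {N : ℕ} (x : ZMod N → Fin 2) (i : ZMod N) : ℕ :=
  ((Finset.range q).filter (fun j : ℕ => x (i + (j : ZMod N)) = 1)).card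

/-- Moving condition of the modified traffic rule: the car at `i` may move right iff
site `i+1` is empty and at most `p-1` of the `q-1` sites `i+1, …, i+q-1` are occupied. -/
abbrev canMove (p q : ℕ) {N : ℕ} (x : ZMod N → Fin 2) (i : ZMod N) : Prop :=
  x (i + 1) = 0 ∧
    ((Finset.range (q - 1)).filter (fun j : ℕ => x (i + 1 + (j : ZMod N)) = 1)).card ≤ p - 1

/-- One parallel update of the modified traffic rule. -/
def traffic (p q : ℕ) {N : ℕ} (x : ZMod N → Fin 2) : ZMod N → Fin 2 :=
  fun i =>
    if (x i = 1 ∧ ¬ canMove p q x i) ∨ (x (i - 1) = 1 ∧ canMove p q x (i - 1)) then 1 else 0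

/-- Number of ones among the `2q+1` sites `i-q, …, i+q`. -/
def nbhdCount (q : ℕ) {N : ℕ} (x : ZMod N → Fin 2) (i : ZMod N) : ℕ :=
  ((Finset.range (2 * q + 1)).filter (fun j : ℕ => x (i - (q : ZMod N) + (j : ZMod N)) = 1)).card

/-- One parallel update of the modified majority rule. -/
def majority (p q : ℕ) {N : ℕ} (x : ZMod N → Fin 2) : ZMod N → Fin 2 :=
  fun i => if 2 * p + 1 ≤ nbhdCount q x i then 1 else 0

/-- Wolfram's elementary CA rule 232 (three-site majority rule). -/
def rule232 {N : ℕ} (x : ZMod N → Fin 2) : ZMod N → Fin 2 :=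
  fun i => if 2 ≤ ((Finset.range 3).filter (fun j : ℕ => x (i - 1 + (j : ZMod N)) = 1)).card
    then 1 else 0

lemma rule232_eq_one_iff {N : ℕ} (x : ZMod N → Fin 2)
    (hsep : ∀ i, x i = 1 → x (i + 1) = 0) (i : ZMod N) :
    rule232 x i = 1 ↔ (x (i - 1) = 1 ∧ x (i + 1) = 1) := by
  unfold rule232
  have h0 : i - 1 + ((0:ℕ):ZMod N) = i - 1 := by push_cast; ring
  have h1 : i - 1 + ((1:ℕ):ZMod N) = i := by push_cast; ring
  have h2 : i - 1 + ((2:ℕ):ZMod N) = i + 1 := by push_cast; ring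
  have hr : (range 3) = {0,1,2} := rfl
  rw [hr]
  have ha := hsep (i - 1)
  have hb := hsep i
  rw [sub_add_cancel] at ha
  simp only [filter_insert, filter_singleton, h0, h1, h2]
  have hx : ∀ v : Fin 2, v = 0 ∨ v = 1 := by decide
  rcases hx (x (i-1)) with ha1 | ha1 <;> rcases hx (x i) with hb1 | hb1 <;>
      rcases hx (x (i+1)) with hc1 | hc1 <;>
    simp only [ha1, hb1, hc1] at ha hb ⊢ <;>
    first
      | decide
      | exact absurd (ha (by decide)) (by decide)
      | exact absurd (hb (by decide)) (by decide)

lemma rule232_zero_or_one {N : ℕ} (x : ZMod N → Fin 2) (i : ZMod N) :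
    rule232 x i = 0 ∨ rule232 x i = 1 := by
  unfold rule232; split <;> simp

lemma rule232_sep {N : ℕ} (x : ZMod N → Fin 2)
    (hsep : ∀ i, x i = 1 → x (i + 1) = 0) (i : ZMod N) :
    rule232 x i = 1 → rule232 x (i + 1) = 0 := by
  intro h1
  rcases rule232_zero_or_one x (i+1) with h | h
  · exact h
  · rw [rule232_eq_one_iff x hsep] at h1 h
    rw [add_sub_cancel_right] at h
    have hz := hsep (i - 1) h1.1
    rw [sub_add_cancel] at hz
    exact absurd h.1 (by rw [hz]; decide)

lemma onesCount_zero_iff {N : ℕ} [NeZero N] (x : ZMod N → Fin 2) :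
    onesCount x = 0 ↔ x = fun _ => 0 := by
  unfold onesCount
  rw [Finset.card_eq_zero, Finset.filter_eq_empty_iff]
  constructor
  · intro h
    funext i
    have := h (mem_univ i)
    revert this
    have hx : ∀ v : Fin 2, v = 0 ∨ v = 1 := by decide
    rcases hx (x i) with h' | h' <;> simp [h']
  · intro h i _
    simp [h]

lemma exists_dead {N : ℕ} [NeZero N] (hN : 3 ≤ N) (x : ZMod N → Fin 2)
    (hρ : onesCount x * 2 < N) (hpos : 0 < onesCount x) :
    ∃ j, x j = 1 ∧ x (j + 2) = 0 := by
  by_contra hcon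
  push_neg at hcon
  have hstep : ∀ j, x j = 1 → x (j + 2) = 1 := by
    intro j hj
    have := hcon j hj
    have hx : ∀ v : Fin 2, v = 0 ∨ v = 1 := by decide
    rcases hx (x (j+2)) with h' | h'
    · exact absurd h' this
    · exact h'
  obtain ⟨i0, hi0⟩ : ∃ i0, x i0 = 1 := by
    unfold onesCount at hpos
    obtain ⟨i0, hi0⟩ := Finset.card_pos.mp hpos
    exact ⟨i0, (Finset.mem_filter.mp hi0).2⟩
  have key : ∀ k : ℕ, x (i0 + ((2 * k : ℕ) : ZMod N)) = 1 := by
    intro k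
    induction k with
    | zero => simpa using hi0
    | succ k ih =>
      have : (((2 * (k+1) : ℕ)) : ZMod N) = ((2 * k : ℕ) : ZMod N) + 2 := by
        push_cast; ring
      rw [this, ← add_assoc]
      exact hstep _ ih
  have hsub : (Finset.range ((N+1)/2)).image (fun k : ℕ => i0 + ((2 * k : ℕ) : ZMod N))
      ⊆ Finset.univ.filter (fun i => x i = 1) := by
    intro j hj
    obtain ⟨k, _, rfl⟩ := Finset.mem_image.mp hj
    exact Finset.mem_filter.mpr ⟨mem_univ _, key k⟩
  have hinj : Set.InjOn (fun k : ℕ => i0 + ((2 * k : ℕ) : ZMod N))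
      (Finset.range ((N+1)/2)) := by
    intro k hk l hl h
    simp only [Finset.coe_range, Set.mem_Iio] at hk hl
    have h2 : ((2 * k : ℕ) : ZMod N) = ((2 * l : ℕ) : ZMod N) := by
      exact add_left_cancel h
    have hkN : 2 * k < N := by omega
    have hlN : 2 * l < N := by omega
    have := congrArg ZMod.val h2
    rw [ZMod.val_natCast_of_lt hkN, ZMod.val_natCast_of_lt hlN] at this
    omega
  have hcard : (N+1)/2 ≤ onesCount x := by
    unfold onesCount
    calc (N+1)/2 = ((Finset.range ((N+1)/2)).image
          (fun k : ℕ => i0 + ((2 * k : ℕ) : ZMod N))).card := by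
          rw [Finset.card_image_of_injOn hinj, Finset.card_range]
      _ ≤ _ := Finset.card_le_card hsub
  omega

lemma onesCount_decrease {N : ℕ} [NeZero N] (hN : 3 ≤ N) (x : ZMod N → Fin 2)
    (hsep : ∀ i, x i = 1 → x (i + 1) = 0)
    (hρ : onesCount x * 2 < N) (hpos : 0 < onesCount x) :
    onesCount (rule232 x) < onesCount x := by
  obtain ⟨j, hj1, hj2⟩ := exists_dead hN x hρ hpos
  unfold onesCount
  set A := Finset.univ.filter (fun i => rule232 x i = 1) with hA
  set B := Finset.univ.filter (fun i => x i = 1) with hB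
  have himg : A.image (fun i => i - 1) ⊆ B := by
    intro m hm
    obtain ⟨i, hi, rfl⟩ := Finset.mem_image.mp hm
    have := (rule232_eq_one_iff x hsep i).mp (Finset.mem_filter.mp hi).2
    exact Finset.mem_filter.mpr ⟨mem_univ _, this.1⟩
  have hjB : j ∈ B := Finset.mem_filter.mpr ⟨mem_univ _, hj1⟩
  have hjnot : j ∉ A.image (fun i => i - 1) := by
    intro hmem
    obtain ⟨i, hi, hie⟩ := Finset.mem_image.mp hmem
    have hij : i = j + 1 := by rwa [sub_eq_iff_eq_add] at hie
    have h := (rule232_eq_one_iff x hsep i).mp (Finset.mem_filter.mp hi).2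
    rw [hij] at h
    have e : j + 1 + 1 = j + 2 := by ring
    rw [e] at h
    exact absurd h.2 (by rw [hj2]; decide)
  have hss : A.image (fun i => i - 1) ⊂ B :=
    ⟨himg, fun hsub => hjnot (hsub hjB)⟩
  calc A.card = (A.image (fun i => i - 1)).card := by
        rw [Finset.card_image_of_injective _ (fun a b h => by
          have := congrArg (· + 1) h
          simpa [sub_add_cancel] using this)]
    _ < B.card := Finset.card_lt_card hss

lemma rule232_zero_fixed {N : ℕ} : rule232 (fun _ : ZMod N => (0 : Fin 2)) = fun _ => 0 := by
  funext i
  unfold rule232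
  simp


/-- if no two consecutive sites are both 1 and fewer than half the sites
are 1, then `⌈N/2⌉` iterations of rule 232 yield the all-zeros configuration. -/
theorem rule232_iter_all_zeros {N : ℕ} [NeZero N] (hN : 3 ≤ N) (x : ZMod N → Fin 2)
    (hsep : ∀ i, x i = 1 → x (i + 1) = 0) (hρ : onesCount x * 2 < N) :
    rule232^[(N + 1) / 2] x = fun _ => 0 := by
  have main : ∀ m : ℕ, ∀ y : ZMod N → Fin 2, (∀ i, y i = 1 → y (i + 1) = 0) →
      onesCount y * 2 < N → onesCount y ≤ m → rule232^[m] y = fun _ => 0 := by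
    intro m
    induction m with
    | zero =>
      intro y _ _ h0
      exact (onesCount_zero_iff y).mp (Nat.le_zero.mp h0)
    | succ m ih =>
      intro y hsepy hρy hle
      rcases Nat.eq_zero_or_pos (onesCount y) with h0 | hpos
      · rw [(onesCount_zero_iff y).mp h0]
        exact Function.iterate_fixed rule232_zero_fixed _
      · rw [Function.iterate_succ_apply]
        have hdec := onesCount_decrease hN y hsepy hρy hpos
        exact ih (rule232 y) (rule232_sep y hsepy) (by omega) (by omega)
  exact main _ x hsep hρ (by omega)
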